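/- Let s > 1 and suppose F_{q^s} is not contained in the field F (of characteristic p, containing F_q). Let L be a q^s-linearized polynomial in F[x] with no repeated roots in its splitting field E. Then the evaluation map ε_s from homogeneous polynomials of degree s over F_q (in n variables, n = q-degree of L) into E, evaluated at an F_q-basis of the root space, is not injective. -/

import Mathlib

open Polynomial

lemma aux_pow_dep (p a q s : ℕ) [Fact p.Prime] (ha : 0 < a) (hq : q = p ^ a) (hs : 0 < s)
    (Fq E : Type) [Field Fq] [Fintype Fq] (hFq : Fintype.card Fq = q)
    [Field E] [CharP E p] [Algebra Fq E] (ω : E) (hω : ω ^ q ^ s = ω) :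
    ∃ lam : Fin (s + 1) → Fq, (∑ i, lam i • ω ^ (i : ℕ)) = 0 ∧ ∃ i, lam i ≠ 0 := by
  have hq2 : 1 < q := hq ▸ Nat.one_lt_pow ha.ne' (Fact.out (p := p.Prime)).one_lt
  rw [← Fintype.not_linearIndependent_iff]
  intro hli
  have hqs : q ^ s = p ^ (a * s) := by rw [hq, ← pow_mul]
  haveI : ExpChar E p := ExpChar.prime Fact.out
  have hfix : ∀ g : Fin (s + 1) → Fq, (∑ i, g i • ω ^ (i : ℕ)) ^ q ^ s
      = ∑ i, g i • ω ^ (i : ℕ) := by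
    intro g
    have : (∑ i, g i • ω ^ (i : ℕ)) ^ q ^ s
        = iterateFrobenius E p (a * s) (∑ i, g i • ω ^ (i : ℕ)) := by
      rw [iterateFrobenius_def, hqs]
    rw [this, map_sum]
    refine Finset.sum_congr rfl fun i _ => ?_
    have h1 : (ω ^ (i : ℕ)) ^ q ^ s = ω ^ (i : ℕ) := by
      rw [← pow_mul, mul_comm, pow_mul, hω]
    rw [iterateFrobenius_def, ← hqs, Algebra.smul_def, mul_pow, ← map_pow, h1]
    congr 2
    rw [← hFq, FiniteField.pow_card_pow]
  have hinj : Function.Injective fun g : Fin (s + 1) → Fq => ∑ i, g i • ω ^ (i : ℕ) := by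
    intro g₁ g₂ h
    funext i
    have := Fintype.linearIndependent_iff.mp hli (g₁ - g₂) ?_ i
    · simpa [sub_eq_zero] using this
    · simp only [Pi.sub_apply, sub_smul, Finset.sum_sub_distrib, h, sub_self]
  have hzero : (X ^ q ^ s - X : E[X]) = 0 := by
    refine Polynomial.eq_zero_of_natDegree_lt_card_of_eval_eq_zero _ hinj (fun g => ?_) ?_
    · simp [hfix g]
    · rw [FiniteField.X_pow_card_pow_sub_X_natDegree_eq E hs.ne' hq2, Fintype.card_fun,
        Fintype.card_fin, hFq]
      exact Nat.pow_lt_pow_right hq2 (lt_add_one s)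
  exact FiniteField.X_pow_card_pow_sub_X_ne_zero E hs.ne' hq2 hzero

lemma aux_exists_omega (p a q s : ℕ) [Fact p.Prime] (ha : 0 < a) (hq : q = p ^ a) (hs : 1 < s)
    (Eb : Type) [Field Eb] [CharP Eb p] [IsAlgClosed Eb] :
    ∃ ω : Eb, ω ^ q ^ s = ω ∧ ω ^ q ≠ ω := by
  have hq2 : 1 < q := hq ▸ Nat.one_lt_pow ha.ne' (Fact.out (p := p.Prime)).one_lt
  by_contra hcon
  push_neg at hcon
  set fp : Eb[X] := X ^ q ^ s - X with hf
  have hsep : fp.Separable :=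
    galois_poly_separable p (q ^ s) (hq ▸ dvd_pow (dvd_pow_self p ha.ne') (by omega))
  have hcard : Fintype.card (fp.rootSet Eb) = q ^ s := by
    rw [card_rootSet_eq_natDegree hsep (IsAlgClosed.splits _),
      FiniteField.X_pow_card_pow_sub_X_natDegree_eq Eb (by omega : s ≠ 0) hq2]
  have hroot : ∀ x : fp.rootSet Eb, (x : Eb) ^ q ^ s = (x : Eb) := by
    rintro ⟨x, hx⟩
    rw [mem_rootSet] at hx
    have := hx.2
    simp only [hf, map_sub, map_pow, aeval_X, sub_eq_zero] at this
    exact this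
  have hzero : (X ^ q - X : Eb[X]) = 0 := by
    refine Polynomial.eq_zero_of_natDegree_lt_card_of_eval_eq_zero _
      (f := (Subtype.val : fp.rootSet Eb → Eb)) Subtype.val_injective (fun x => ?_) ?_
    · have := hcon x (hroot x)
      simp [this]
    · rw [FiniteField.X_pow_card_sub_X_natDegree_eq Eb hq2, hcard]
      calc q = q ^ 1 := (pow_one q).symm
        _ < q ^ s := Nat.pow_lt_pow_right hq2 hs
  exact FiniteField.X_pow_card_sub_X_ne_zero Eb hq2 hzero

/-- If `s > 1` and `F` contains no copy of `F_{q^s}`, and `L` is a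
`q^s`-linearized polynomial over `F` with no repeated roots, then the evaluation map on
homogeneous polynomials of degree `s` at an `F_q`-basis of the root space is not
injective. -/
theorem stmt_15 (p a q s : ℕ) [Fact p.Prime] (ha : 0 < a) (hq : q = p ^ a) (hs : 1 < s)
    (Fq F E : Type) [Field Fq] [Fintype Fq] (hFq : Fintype.card Fq = q)
    [Field F] [CharP F p] [Algebra Fq F] [Field E] [Algebra F E] [Algebra Fq E]
    [IsScalarTower Fq F E]
    (hnotsub : ¬ ∃ K : Subfield F, Nat.card K = q ^ s)
    (m n : ℕ) (hn : n = m * s) (hm : 1 ≤ m)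
    (c : ℕ → F) (hm' : c m ≠ 0)
    (L : F[X]) (hL : L = ∑ i ∈ Finset.range (m + 1), C (c i) * X ^ (q ^ s) ^ i)
    (hsq : Squarefree L)
    (hsplit : L.IsSplittingField F E)
    (v : Fin n → E) (hroots : ∀ i, aeval (v i) L = 0)
    (hli : LinearIndependent Fq v)
    (hspan : (Submodule.span Fq (Set.range v) : Set E) = {x : E | aeval x L = 0}) :
    ∃ P : MvPolynomial (Fin n) Fq,
      P ∈ MvPolynomial.homogeneousSubmodule (Fin n) Fq s ∧ P ≠ 0 ∧
      MvPolynomial.aeval v P = 0 := by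
  classical
  have hq2 : 1 < q := hq ▸ Nat.one_lt_pow ha.ne' (Fact.out (p := p.Prime)).one_lt
  have hqs2 : 1 < q ^ s := Nat.one_lt_pow (by omega) hq2
  have hsn : s ≤ n := hn ▸ Nat.le_mul_of_pos_left s hm
  haveI : NeZero n := ⟨by omega⟩
  haveI : CharP E p := charP_of_injective_algebraMap (algebraMap F E).injective p
  -- L is nonzero
  have hLcoeff : L.coeff ((q ^ s) ^ m) = c m := by
    rw [hL, finset_sum_coeff]
    simp only [coeff_C_mul, coeff_X_pow]
    rw [Finset.sum_eq_single m]
    · simp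
    · intro i hi hne
      rw [if_neg, mul_zero]
      exact fun h => hne (Nat.pow_right_injective hqs2 h).symm
    · intro h; exact absurd (Finset.self_mem_range_succ m) h
  have hLne : L ≠ 0 := by
    intro h
    rw [h, coeff_zero] at hLcoeff
    exact hm' hLcoeff.symm
  -- pass to an algebraic closure
  set Eb := AlgebraicClosure E with hEb
  haveI : CharP Eb p := charP_of_injective_algebraMap (algebraMap E Eb).injective p
  obtain ⟨ω, hω1, hω2⟩ := aux_exists_omega p a q s ha hq hs Eb
  set α := v 0 with hα
  have hα0 : α ≠ 0 := hli.ne_zero 0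
  have hαroot : aeval α L = 0 := hroots 0
  have hωpow : ∀ i : ℕ, ω ^ (q ^ s) ^ i = ω := by
    intro i
    induction i with
    | zero => simp
    | succ k ih => rw [pow_succ, pow_mul, ih, hω1]
  have haev : ∀ x : Eb, aeval x L
      = ∑ i ∈ Finset.range (m + 1), algebraMap F Eb (c i) * x ^ (q ^ s) ^ i := by
    intro x
    rw [hL, map_sum]
    simp only [map_mul, aeval_C, map_pow, aeval_X]
  have key : aeval (ω * algebraMap E Eb α) L = 0 := by
    rw [haev]
    have h1 : ∀ i ∈ Finset.range (m + 1),
        algebraMap F Eb (c i) * (ω * algebraMap E Eb α) ^ (q ^ s) ^ i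
          = ω * (algebraMap F Eb (c i) * (algebraMap E Eb α) ^ (q ^ s) ^ i) := by
      intro i _
      rw [mul_pow, hωpow]
      ring
    rw [Finset.sum_congr rfl h1, ← Finset.mul_sum, ← haev,
      aeval_algebraMap_apply, hαroot, map_zero, mul_zero]
  -- pull the root back to E
  obtain ⟨β, hβmem, hβeq⟩ : ∃ β ∈ L.rootSet E,
      (IsScalarTower.toAlgHom F E Eb) β = ω * algebraMap E Eb α := by
    have himg := Polynomial.Splits.image_rootSet hsplit.splits' (IsScalarTower.toAlgHom F E Eb)
    have hmem : ω * algebraMap E Eb α ∈ L.rootSet Eb := by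
      rw [mem_rootSet]
      exact ⟨hLne, key⟩
    rw [← himg] at hmem
    obtain ⟨β, hβ1, hβ2⟩ := hmem
    exact ⟨β, hβ1, hβ2⟩
  have hβroot : aeval β L = 0 := (mem_rootSet.mp hβmem).2
  have hβeq' : algebraMap E Eb β = ω * algebraMap E Eb α := hβeq
  set ω₀ := β / α with hω₀def
  have hβα : β = ω₀ * α := (div_mul_cancel₀ β hα0).symm
  have hᾱ0 : algebraMap E Eb α ≠ 0 :=
    (map_ne_zero_iff _ (algebraMap E Eb).injective).mpr hα0
  have hmapω : algebraMap E Eb ω₀ = ω := by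
    rw [hω₀def, map_div₀, hβeq', mul_div_assoc, div_self hᾱ0, mul_one]
  have hω₀1 : ω₀ ^ q ^ s = ω₀ := by
    apply (algebraMap E Eb).injective
    rw [map_pow, hmapω, hω1]
  have hω₀2 : ω₀ ^ q ≠ ω₀ := by
    intro h
    apply hω2
    rw [← hmapω, ← map_pow, h]
  obtain ⟨lam, hrel, i₀, hi₀⟩ := aux_pow_dep p a q s ha hq (by omega) Fq E hFq ω₀ hω₀1
  -- coordinates of β in the basis v
  have hβspan : β ∈ Submodule.span Fq (Set.range v) := by
    rw [← SetLike.mem_coe, hspan]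
    exact hβroot
  obtain ⟨b, hb⟩ := (Submodule.mem_span_range_iff_exists_fun Fq).mp hβspan
  have hω₀q : ∀ t : Fq, ω₀ ≠ algebraMap Fq E t := by
    intro t h
    apply hω₀2
    rw [h, ← map_pow]
    congr 1
    rw [← hFq, FiniteField.pow_card]
  obtain ⟨j₀, hj₀ne, hj₀⟩ : ∃ j : Fin n, j ≠ 0 ∧ b j ≠ 0 := by
    by_contra hcon
    push_neg at hcon
    have hβ0 : β = b 0 • α := by
      rw [← hb, Finset.sum_eq_single 0 (fun j _ hj => by rw [hcon j hj, zero_smul])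
        (fun h => absurd (Finset.mem_univ 0) h)]
    apply hω₀q (b 0)
    have : ω₀ * α = algebraMap Fq E (b 0) * α := by
      rw [← hβα, hβ0, Algebra.smul_def]
    exact mul_right_cancel₀ hα0 this
  -- the polynomials
  set B : MvPolynomial (Fin n) Fq := ∑ j, MvPolynomial.C (b j) * MvPolynomial.X j with hB
  set P : MvPolynomial (Fin n) Fq :=
    ∑ i : Fin (s + 1),
      MvPolynomial.C (lam i) * MvPolynomial.X 0 ^ (s - (i : ℕ)) * B ^ (i : ℕ) with hP
  have hile : ∀ i : Fin (s + 1), (i : ℕ) ≤ s := fun i => Nat.lt_succ_iff.mp i.isLt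
  have hBhom : B.IsHomogeneous 1 := by
    apply MvPolynomial.IsHomogeneous.sum
    intro j _
    simpa using (MvPolynomial.isHomogeneous_C _ (b j)).mul (MvPolynomial.isHomogeneous_X _ j)
  have hevB : MvPolynomial.aeval v B = β := by
    rw [hB, map_sum, ← hb]
    refine Finset.sum_congr rfl fun j _ => ?_
    rw [map_mul, MvPolynomial.aeval_C, MvPolynomial.aeval_X, Algebra.smul_def]
  refine ⟨P, ?_, ?_, ?_⟩
  · rw [MvPolynomial.mem_homogeneousSubmodule]
    apply MvPolynomial.IsHomogeneous.sum
    intro i _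
    have h := ((MvPolynomial.isHomogeneous_C (Fin n) (lam i)).mul
      ((MvPolynomial.isHomogeneous_X Fq (0 : Fin n)).pow (s - (i : ℕ)))).mul
        (hBhom.pow (i : ℕ))
    simp only [zero_add, one_mul] at h
    rwa [Nat.sub_add_cancel (hile i)] at h
  · -- nonzero, via a substitution into two variables
    set W : MvPolynomial (Fin 2) Fq :=
      MvPolynomial.C (b j₀)⁻¹ *
        (MvPolynomial.X 1 - MvPolynomial.C (b 0) * MvPolynomial.X 0) with hW
    set u : Fin n → MvPolynomial (Fin 2) Fq := fun j =>
      (if j = 0 then MvPolynomial.X 0 else 0) + (if j = j₀ then W else 0) with hu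
    have hu0 : u 0 = MvPolynomial.X 0 := by
      simp [hu, (hj₀ne.symm : (0 : Fin n) ≠ j₀)]
    have hψB : MvPolynomial.aeval u B = MvPolynomial.X 1 := by
      rw [hB, map_sum]
      simp only [map_mul, MvPolynomial.aeval_C, MvPolynomial.aeval_X,
        MvPolynomial.algebraMap_eq]
      simp only [hu, mul_add, mul_ite, mul_zero, Finset.sum_add_distrib,
        Finset.sum_ite_eq', Finset.mem_univ, if_true]
      rw [hW, ← mul_assoc, ← MvPolynomial.C_mul, mul_inv_cancel₀ hj₀,
        MvPolynomial.C_1, one_mul]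
      ring
    intro hP0
    have hψP : MvPolynomial.aeval u P
        = ∑ i : Fin (s + 1), MvPolynomial.C (lam i)
            * MvPolynomial.X 0 ^ (s - (i : ℕ)) * MvPolynomial.X 1 ^ (i : ℕ) := by
      rw [hP, map_sum]
      refine Finset.sum_congr rfl fun i _ => ?_
      rw [map_mul, map_mul, map_pow, map_pow, MvPolynomial.aeval_C,
        MvPolynomial.aeval_X, hu0, hψB, MvPolynomial.algebraMap_eq]
    set dd : Fin (s + 1) → (Fin 2 →₀ ℕ) := fun i =>
      Finsupp.single 0 (s - (i : ℕ)) + Finsupp.single 1 (i : ℕ) with hdd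
    have hterm : ∀ i : Fin (s + 1),
        MvPolynomial.C (lam i) * MvPolynomial.X 0 ^ (s - (i : ℕ))
          * MvPolynomial.X 1 ^ (i : ℕ)
        = MvPolynomial.monomial (dd i) (lam i) := by
      intro i
      rw [MvPolynomial.X_pow_eq_monomial, MvPolynomial.X_pow_eq_monomial,
        MvPolynomial.C_mul_monomial, MvPolynomial.monomial_mul, hdd, mul_one, mul_one]
    have hcoeff : MvPolynomial.coeff (dd i₀) (MvPolynomial.aeval u P) = lam i₀ := by
      rw [hψP]
      rw [Finset.sum_congr rfl fun i _ => hterm i, MvPolynomial.coeff_sum]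
      simp only [MvPolynomial.coeff_monomial]
      rw [Finset.sum_eq_single i₀]
      · rw [if_pos rfl]
      · intro i _ hne
        rw [if_neg]
        intro h
        apply hne
        have h1 := DFunLike.congr_fun h 1
        simp only [hdd, Finsupp.add_apply, Finsupp.single_apply] at h1
        have : (i : ℕ) = (i₀ : ℕ)  := by simpa using h1
        exact Fin.ext this
      · intro h; exact absurd (Finset.mem_univ i₀) h
    rw [hP0, map_zero, MvPolynomial.coeff_zero] at hcoeff
    exact hi₀ hcoeff.symm
  · -- evaluation at v is zero
    rw [hP, map_sum]
    have hterm : ∀ i : Fin (s + 1),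
        MvPolynomial.aeval v
          (MvPolynomial.C (lam i) * MvPolynomial.X 0 ^ (s - (i : ℕ)) * B ^ (i : ℕ))
        = (lam i • ω₀ ^ (i : ℕ)) * α ^ s := by
      intro i
      rw [map_mul, map_mul, map_pow, map_pow, MvPolynomial.aeval_C,
        MvPolynomial.aeval_X, hevB, hβα, mul_pow, Algebra.smul_def]
      have hpowα : α ^ (s - (i : ℕ)) * α ^ (i : ℕ) = α ^ s := by
        rw [← pow_add, Nat.sub_add_cancel (hile i)]
      calc algebraMap Fq E (lam i) * α ^ (s - (i : ℕ)) * (ω₀ ^ (i : ℕ) * α ^ (i : ℕ))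
          = algebraMap Fq E (lam i) * ω₀ ^ (i : ℕ) * (α ^ (s - (i : ℕ)) * α ^ (i : ℕ)) := by
            ring
        _ = algebraMap Fq E (lam i) * ω₀ ^ (i : ℕ) * α ^ s := by rw [hpowα]
    rw [Finset.sum_congr rfl fun i _ => hterm i, ← Finset.sum_mul, hrel, zero_mul]
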